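/- (Theorem 1, small-aperture case) Let u, v ∈ ℝ³ be unit vectors with 0 < ‖u − v‖L < λ, λ > 0, N a positive integer. Then the minimum over t on the sphere ‖t‖ = L of f(t) = |∑_{n=1}^{N} exp(j·(2π/λ)·(n/N)·(u−v)^T t)| equals |sin(π‖u−v‖L/λ)| / |sin(π‖u−v‖L/(Nλ))|, attained at t = ±L(u−v)/‖u−v‖. -/

import Mathlib

open Real

-- |exp(I·2a) - 1| = 2|sin a|
lemma aux_abs_exp_sub_one (a : ℝ) :
    ‖Complex.exp (Complex.I * (2 * a : ℝ)) - 1‖ = 2 * |Real.sin a| := by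
  have h : Complex.exp (Complex.I * (2 * a : ℝ)) - 1
      = Complex.exp ((a : ℂ) * Complex.I) * (2 * Complex.sin (a : ℂ) * Complex.I) := by
    have e1 : Complex.I * ((2 * a : ℝ) : ℂ) = (a : ℂ) * Complex.I + (a : ℂ) * Complex.I := by
      push_cast; ring
    have e2 : (1 : ℂ) = Complex.exp ((a : ℂ) * Complex.I) * Complex.exp (-(a : ℂ) * Complex.I) := by
      rw [← Complex.exp_add]
      norm_num
    rw [e1, Complex.exp_add, e2, ← mul_sub, Complex.exp_mul_I, Complex.exp_mul_I,
      Complex.cos_neg, Complex.sin_neg]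
    ring
  rw [h, norm_mul, norm_mul, norm_mul, Complex.norm_exp_ofReal_mul_I, ← Complex.ofReal_sin,
    Complex.norm_real, Complex.norm_I]
  norm_num

-- geometric sum identity
lemma aux_geom (N : ℕ) (θ : ℝ) :
    ‖∑ n ∈ Finset.Icc 1 N, Complex.exp (Complex.I * (2 * n * θ : ℝ))‖ * |Real.sin θ|
      = |Real.sin (N * θ)| := by
  have hterm : ∀ n : ℕ, Complex.exp (Complex.I * (2 * n * θ : ℝ))
      = (Complex.exp (Complex.I * (2 * θ : ℝ))) ^ n := by
    intro n
    rw [← Complex.exp_nat_mul]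
    congr 1
    push_cast; ring
  rcases eq_or_ne (Real.sin θ) 0 with h | h
  · obtain ⟨k, hk⟩ := Real.sin_eq_zero_iff.mp h
    have : Real.sin ((N : ℝ) * θ) = 0 := by
      rw [← hk, show (N:ℝ) * ((k:ℝ) * π) = ((N * k : ℤ) : ℝ) * π by push_cast; ring]
      exact Real.sin_int_mul_pi _
    rw [h, this]
    simp
  · set z : ℂ := Complex.exp (Complex.I * (2 * θ : ℝ)) with hz
    have hz1 : z ≠ 1 := by
      intro hzz
      apply h
      have : ‖z - 1‖ = 2 * |Real.sin θ| := aux_abs_exp_sub_one θ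
      rw [hzz, sub_self, norm_zero] at this
      have := this.symm
      simpa [abs_eq_zero] using this
    have hsum : ∑ n ∈ Finset.Icc 1 N, Complex.exp (Complex.I * (2 * n * θ : ℝ))
        = (z ^ (N + 1) - z ^ 1) / (z - 1) := by
      rw [← Finset.Ico_add_one_right_eq_Icc]
      rw [Finset.sum_congr rfl (fun n _ => hterm n)]
      exact geom_sum_Ico hz1 (by omega)
    have hzN : z ^ N = Complex.exp (Complex.I * (2 * ((N : ℝ) * θ) : ℝ)) := by
      rw [← Complex.exp_nat_mul]
      congr 1
      push_cast; ring
    have habs1 : ‖z ^ N - 1‖ = 2 * |Real.sin ((N : ℝ) * θ)| := by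
      rw [hzN]; exact aux_abs_exp_sub_one _
    have habs2 : ‖z - 1‖ = 2 * |Real.sin θ| := aux_abs_exp_sub_one θ
    have hfac : z ^ (N + 1) - z ^ 1 = z * (z ^ N - 1) := by ring
    have hzabs : ‖z‖ = 1 := by
      rw [hz, mul_comm]; exact Complex.norm_exp_ofReal_mul_I _
    rw [hsum, hfac, norm_div, norm_mul, hzabs, one_mul, habs1, habs2]
    have hs : |Real.sin θ| ≠ 0 := abs_ne_zero.mpr h
    field_simp

-- |sin(nθ)| ≤ n|sin θ|
lemma aux_sin_le (n : ℕ) (θ : ℝ) : |Real.sin (n * θ)| ≤ n * |Real.sin θ| := by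
  induction n with
  | zero => simp
  | succ k ih =>
    have : ((k + 1 : ℕ) : ℝ) * θ = k * θ + θ := by push_cast; ring
    rw [this, Real.sin_add]
    calc |Real.sin (k*θ) * Real.cos θ + Real.cos (k*θ) * Real.sin θ|
        ≤ |Real.sin (k*θ) * Real.cos θ| + |Real.cos (k*θ) * Real.sin θ| := abs_add_le _ _
      _ ≤ |Real.sin (k*θ)| * 1 + 1 * |Real.sin θ| := by
          rw [abs_mul, abs_mul]
          gcongr
          · exact abs_cos_le_one θ
          · exact abs_cos_le_one _
      _ ≤ (k : ℝ) * |Real.sin θ| + |Real.sin θ| := by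
          rw [mul_one, one_mul]; gcongr
      _ = ((k + 1 : ℕ) : ℝ) * |Real.sin θ| := by push_cast; ring

-- key monotonicity: for 0 ≤ x ≤ y with N y ≤ π, sin(Ny) sin x ≤ sin(Nx) sin y
lemma aux_mono (N : ℕ) : ∀ x y : ℝ, 0 ≤ x → x ≤ y → ((N : ℝ) + 1) * y ≤ π →
    Real.sin (((N : ℝ) + 1) * y) * Real.sin x ≤ Real.sin (((N : ℝ) + 1) * x) * Real.sin y := by
  induction N with
  | zero =>
    intro x y hx hxy hyπ
    norm_num [mul_comm]
  | succ k ih =>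
    intro x y hx hxy hyπ
    push_cast at hyπ
    have hyge : (0:ℝ) ≤ y := hx.trans hxy
    have hk0 : (0:ℝ) ≤ (k:ℝ) := Nat.cast_nonneg k
    have hy2 : y ≤ π / 2 := by nlinarith [mul_nonneg hk0 hyge]
    have hyπ' : ((k:ℝ) + 1) * y ≤ π := by nlinarith [mul_nonneg hk0 hyge]
    have hxpi : x ≤ π := le_trans (hxy.trans hy2) (by linarith [Real.pi_pos])
    have hsx : 0 ≤ Real.sin x := Real.sin_nonneg_of_nonneg_of_le_pi hx (by linarith [Real.pi_pos, hxy.trans hy2])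
    have hsy : 0 ≤ Real.sin y := Real.sin_nonneg_of_nonneg_of_le_pi hyge (by linarith [Real.pi_pos])
    have hcy : 0 ≤ Real.cos y := Real.cos_nonneg_of_mem_Icc ⟨by linarith [Real.pi_pos], hy2⟩
    have hcxy : Real.cos y ≤ Real.cos x := by
      apply Real.cos_le_cos_of_nonneg_of_le_pi hx (by linarith [Real.pi_pos]) hxy
    have hIH := ih x y hx hxy hyπ'
    have hsNy : 0 ≤ Real.sin (((k:ℝ) + 1) * y) :=
      Real.sin_nonneg_of_nonneg_of_le_pi (by positivity) hyπ'
    have hsNx : 0 ≤ Real.sin (((k:ℝ) + 1) * x) := by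
      apply Real.sin_nonneg_of_nonneg_of_le_pi (by positivity)
      calc ((k:ℝ)+1) * x ≤ ((k:ℝ)+1) * y := by gcongr
        _ ≤ π := hyπ'
    have hcmono : Real.cos (((k:ℝ) + 1) * y) ≤ Real.cos (((k:ℝ) + 1) * x) := by
      apply Real.cos_le_cos_of_nonneg_of_le_pi (by positivity) hyπ'
      gcongr
    have ex : ((k:ℝ) + 1 + 1) * x = ((k:ℝ) + 1) * x + x := by ring
    have ey : ((k:ℝ) + 1 + 1) * y = ((k:ℝ) + 1) * y + y := by ring
    push_cast
    rw [ex, ey, Real.sin_add, Real.sin_add]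
    nlinarith [mul_nonneg hsx hsy, mul_nonneg hsNx hsy, mul_le_mul_of_nonneg_left hIH hcy,
      mul_le_mul_of_nonneg_right hcxy (mul_nonneg hsNx hsy),
      mul_le_mul_of_nonneg_right hcmono (mul_nonneg hsx hsy)]

lemma aux_key (lam : ℝ) (hlam : 0 < lam) (N : ℕ) (hN : 0 < N) (d : ℝ) :
    ‖∑ n ∈ Finset.Icc 1 N, Complex.exp (Complex.I * ((2 * π / lam) * ((n : ℝ) / (N : ℝ)) * d : ℝ))‖
      * |Real.sin (π * d / (N * lam))| = |Real.sin (π * d / lam)| := by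
  have hNne : (N:ℝ) ≠ 0 := Nat.cast_ne_zero.mpr hN.ne'
  have h := aux_geom N (π * d / (N * lam))
  have hNθ : (N:ℝ) * (π * d / (N * lam)) = π * d / lam := by field_simp
  rw [hNθ] at h
  have hsum : ∑ n ∈ Finset.Icc 1 N, Complex.exp (Complex.I * ((2 * π / lam) * ((n : ℝ) / (N : ℝ)) * d : ℝ))
      = ∑ n ∈ Finset.Icc 1 N, Complex.exp (Complex.I * (2 * n * (π * d / (N * lam)) : ℝ)) := by
    apply Finset.sum_congr rfl
    intro n _
    have : ((2 * π / lam) * ((n : ℝ) / (N : ℝ)) * d : ℝ) = (2 * n * (π * d / (N * lam)) : ℝ) := by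
      field_simp
    rw [this]
  rw [hsum, h]

lemma aux_bound (lam : ℝ) (hlam : 0 < lam) (N : ℕ) (hN : 0 < N) (D d : ℝ)
    (hD : 0 < D) (hDlam : D < lam) (hd : |d| ≤ D) :
    |Real.sin (π * D / lam)| / |Real.sin (π * D / (N * lam))|
      ≤ ‖(∑ n ∈ Finset.Icc 1 N,
          Complex.exp (Complex.I * ((2 * π / lam) * ((n : ℝ) / (N : ℝ)) * d : ℝ)))‖ := by
  obtain ⟨M, rfl⟩ : ∃ M, N = M + 1 := ⟨N - 1, (Nat.succ_pred_eq_of_pos hN).symm⟩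
  set N := M + 1 with hNdef
  have hNR : (0:ℝ) < (N:ℝ) := by positivity
  have hNne : (N:ℝ) ≠ 0 := ne_of_gt hNR
  have hπ := Real.pi_pos
  set θ0 : ℝ := π * D / (N * lam) with hθ0
  set x : ℝ := π * |d| / (N * lam) with hxdef
  have hθ0pos : 0 < θ0 := by rw [hθ0]; positivity
  have hN1 : (1:ℝ) ≤ (N:ℝ) := by exact_mod_cast hN
  have hNθ0 : (N:ℝ) * θ0 = π * D / lam := by rw [hθ0]; field_simp
  have hNθ0lt : (N:ℝ) * θ0 < π := by
    rw [hNθ0, div_lt_iff₀ hlam]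
    nlinarith
  have hθ0ltπ : θ0 < π := by nlinarith [mul_nonneg (sub_nonneg.mpr hN1) hθ0pos.le]
  have hs0 : 0 < Real.sin θ0 := Real.sin_pos_of_pos_of_lt_pi hθ0pos hθ0ltπ
  have hxnonneg : 0 ≤ x := by rw [hxdef]; positivity
  have hxθ0 : x ≤ θ0 := by
    rw [hxdef, hθ0]
    gcongr
  have hNx : (N:ℝ) * x = π * |d| / lam := by rw [hxdef]; field_simp
  have hsinNx : 0 ≤ Real.sin ((N:ℝ) * x) := by
    apply Real.sin_nonneg_of_nonneg_of_le_pi (by positivity)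
    nlinarith
  have hsinNθ0 : 0 ≤ Real.sin ((N:ℝ) * θ0) :=
    Real.sin_nonneg_of_nonneg_of_le_pi (by positivity) hNθ0lt.le
  have hsinx : 0 ≤ Real.sin x :=
    Real.sin_nonneg_of_nonneg_of_le_pi hxnonneg (by nlinarith)
  -- rewrite the target value
  have hv1 : |Real.sin (π * D / lam)| = Real.sin ((N:ℝ) * θ0) := by
    rw [hNθ0]; exact abs_of_nonneg (hNθ0 ▸ hsinNθ0)
  have hv2 : |Real.sin (π * D / (N * lam))| = Real.sin θ0 := abs_of_nonneg hs0.le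
  have key := aux_key lam hlam N hN d
  -- |sin (π d / (N lam))| = sin x and |sin (π d / lam)| = sin (N x)
  have habs1 : |Real.sin (π * d / (N * lam))| = Real.sin x := by
    rcases abs_cases d with ⟨h1, _⟩ | ⟨h1, _⟩
    · rw [show π * d / ((N:ℝ) * lam) = x by rw [hxdef, h1]]
      exact abs_of_nonneg hsinx
    · rw [show π * d / ((N:ℝ) * lam) = -x by rw [hxdef, h1]; ring, Real.sin_neg, abs_neg]
      exact abs_of_nonneg hsinx
  have habs2 : |Real.sin (π * d / lam)| = Real.sin ((N:ℝ) * x) := by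
    rcases abs_cases d with ⟨h1, _⟩ | ⟨h1, _⟩
    · rw [show π * d / lam = (N:ℝ) * x by rw [hNx, h1]]
      exact abs_of_nonneg hsinNx
    · rw [show π * d / lam = -((N:ℝ) * x) by rw [hNx, h1]; ring, Real.sin_neg, abs_neg]
      exact abs_of_nonneg hsinNx
  rw [hv1, hv2]
  rw [habs1, habs2] at key
  rcases eq_or_lt_of_le hsinx with hx0 | hxpos
  · -- sin x = 0, hence x = 0, hence d = 0
    have hxz : x = 0 := by
      by_contra hne
      have : 0 < x := lt_of_le_of_ne hxnonneg (Ne.symm hne)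
      have := Real.sin_pos_of_pos_of_lt_pi this (by nlinarith)
      linarith [hx0]
    have hd0 : d = 0 := by
      by_contra hne
      have hda : 0 < |d| := abs_pos.mpr hne
      have hxp : 0 < x := by rw [hxdef]; positivity
      rw [hxz] at hxp
      exact lt_irrefl 0 hxp
    have hsumN : (∑ n ∈ Finset.Icc 1 N,
        Complex.exp (Complex.I * ((2 * π / lam) * ((n : ℝ) / (N : ℝ)) * d : ℝ))) = (N : ℂ) := by
      rw [hd0]
      simp
    rw [hsumN]
    have : ‖(N : ℂ)‖ = (N : ℝ) := by
      rw [show ((N:ℕ) : ℂ) = ((N:ℝ) : ℂ) by push_cast; ring, Complex.norm_real, Real.norm_eq_abs,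
        abs_of_pos hNR]
    rw [this, div_le_iff₀ hs0]
    calc Real.sin ((N:ℝ) * θ0) ≤ |Real.sin ((N:ℝ) * θ0)| := le_abs_self _
      _ ≤ (N:ℝ) * |Real.sin θ0| := aux_sin_le N θ0
      _ = (N:ℝ) * Real.sin θ0 := by rw [abs_of_nonneg hs0.le]
  · -- sin x > 0
    have hmono := aux_mono M x θ0 hxnonneg hxθ0 (by rw [hNdef] at hNθ0lt; push_cast at hNθ0lt ⊢; linarith)
    have hmono' : Real.sin ((N:ℝ) * θ0) * Real.sin x ≤ Real.sin ((N:ℝ) * x) * Real.sin θ0 := by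
      have hcast : ((M:ℝ) + 1) = (N:ℝ) := by rw [hNdef]; push_cast; ring
      rwa [hcast] at hmono
    rw [div_le_iff₀ hs0]
    have hS : ‖(∑ n ∈ Finset.Icc 1 N,
        Complex.exp (Complex.I * ((2 * π / lam) * ((n : ℝ) / (N : ℝ)) * d : ℝ)))‖
        = Real.sin ((N:ℝ) * x) / Real.sin x := by
      rw [eq_div_iff (ne_of_gt hxpos)]
      exact key
    rw [hS]
    rw [div_mul_eq_mul_div, le_div_iff₀ hxpos]
    nlinarith

lemma aux_eqval (lam : ℝ) (hlam : 0 < lam) (N : ℕ) (hN : 0 < N) (D d : ℝ)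
    (hD : 0 < D) (hDlam : D < lam) (hd : |d| = D) :
    ‖(∑ n ∈ Finset.Icc 1 N,
        Complex.exp (Complex.I * ((2 * π / lam) * ((n : ℝ) / (N : ℝ)) * d : ℝ)))‖
      = |Real.sin (π * D / lam)| / |Real.sin (π * D / (N * lam))| := by
  have hNR : (0:ℝ) < (N:ℝ) := by exact_mod_cast hN
  have hπ := Real.pi_pos
  have hθ0pos : 0 < π * D / (N * lam) := by positivity
  have hN1 : (1:ℝ) ≤ (N:ℝ) := by exact_mod_cast hN
  have hθ0ltπ : π * D / (N * lam) < π := by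
    rw [div_lt_iff₀ (by positivity)]
    nlinarith [mul_lt_mul_of_pos_left hDlam hπ,
      mul_nonneg (mul_nonneg hπ.le (sub_nonneg.mpr hN1)) hlam.le]
  have hs0 : 0 < Real.sin (π * D / (N * lam)) := Real.sin_pos_of_pos_of_lt_pi hθ0pos hθ0ltπ
  have key := aux_key lam hlam N hN d
  have habs1 : |Real.sin (π * d / (N * lam))| = |Real.sin (π * D / (N * lam))| := by
    rcases (abs_eq hD.le).mp hd with rfl | rfl
    · rfl
    · rw [show π * -D / ((N:ℝ) * lam) = -(π * D / (N * lam)) by ring, Real.sin_neg, abs_neg]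
  have habs2 : |Real.sin (π * d / lam)| = |Real.sin (π * D / lam)| := by
    rcases (abs_eq hD.le).mp hd with rfl | rfl
    · rfl
    · rw [show π * -D / lam = -(π * D / lam) by ring, Real.sin_neg, abs_neg]
  rw [habs1, habs2] at key
  rw [eq_div_iff (by positivity : |Real.sin (π * D / (N * lam))| ≠ 0)]
  · exact key

/-- Theorem 1, small-aperture case: if `0 < ‖u-v‖L < λ`, the minimum over the
sphere `‖t‖ = L` of the far-field array response correlation equals
`|sin(π‖u-v‖L/λ)| / |sin(π‖u-v‖L/(Nλ))|`, attained at `t = ±L(u-v)/‖u-v‖`. -/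
theorem stmt_6 (u v : EuclideanSpace ℝ (Fin 3)) (hu : ‖u‖ = 1) (hv : ‖v‖ = 1)
    (lam L : ℝ) (hlam : 0 < lam) (N : ℕ) (hN : 0 < N)
    (hpos : 0 < ‖u - v‖ * L) (hsmall : ‖u - v‖ * L < lam)
    (f : EuclideanSpace ℝ (Fin 3) → ℝ)
    (hf : ∀ t, f t = ‖(∑ n ∈ Finset.Icc 1 N,
        Complex.exp (Complex.I * ((2 * π / lam) * ((n : ℝ) / (N : ℝ))
          * (inner ℝ (u - v) t : ℝ) : ℝ)))‖) :
    (∀ t : EuclideanSpace ℝ (Fin 3), ‖t‖ = L →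
        |Real.sin (π * (‖u - v‖ * L) / lam)| / |Real.sin (π * (‖u - v‖ * L) / (N * lam))|
          ≤ f t) ∧
    f ((L / ‖u - v‖) • (u - v))
      = |Real.sin (π * (‖u - v‖ * L) / lam)| / |Real.sin (π * (‖u - v‖ * L) / (N * lam))| ∧
    f (-((L / ‖u - v‖) • (u - v)))
      = |Real.sin (π * (‖u - v‖ * L) / lam)| / |Real.sin (π * (‖u - v‖ * L) / (N * lam))| := by
  have hnv : 0 ≤ ‖u - v‖ := norm_nonneg _
  have hDn : 0 < ‖u - v‖ := by
    rcases hnv.lt_or_eq with h | h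
    · exact h
    · rw [← h, zero_mul] at hpos; exact absurd hpos (lt_irrefl 0)
  have hL : 0 < L := by nlinarith
  refine ⟨?_, ?_, ?_⟩
  · intro t ht
    rw [hf t]
    apply aux_bound lam hlam N hN (‖u - v‖ * L) _ hpos hsmall
    calc |(inner ℝ (u - v) t : ℝ)| ≤ ‖u - v‖ * ‖t‖ := abs_real_inner_le_norm _ _
      _ = ‖u - v‖ * L := by rw [ht]
  · rw [hf]
    have hip : (inner ℝ (u - v) ((L / ‖u - v‖) • (u - v)) : ℝ) = ‖u - v‖ * L := by
      rw [real_inner_smul_right, real_inner_self_eq_norm_mul_norm]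
      field_simp
    rw [hip]
    exact aux_eqval lam hlam N hN (‖u - v‖ * L) (‖u - v‖ * L) hpos hsmall
      (abs_of_pos hpos)
  · rw [hf]
    have hip : (inner ℝ (u - v) (-((L / ‖u - v‖) • (u - v))) : ℝ) = -(‖u - v‖ * L) := by
      rw [inner_neg_right, real_inner_smul_right, real_inner_self_eq_norm_mul_norm]
      field_simp
    rw [hip]
    exact aux_eqval lam hlam N hN (‖u - v‖ * L) (-(‖u - v‖ * L)) hpos hsmall
      (by rw [abs_neg]; exact abs_of_pos hpos)
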